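/- The union of an I₀ set with a finite subset of ℕ is an I₀ set. -/

import Mathlib

/-- A sequence `ψ : ℕ → ℂ` is almost periodic if it is a uniform limit of
trigonometric polynomials. -/
def AlmostPeriodic (ψ : ℕ → ℂ) : Prop :=
  ∀ ε : ℝ, 0 < ε → ∃ (m : ℕ) (c : Fin m → ℂ) (α : Fin m → ℝ),
    ∀ n : ℕ, ‖ψ n - ∑ j, c j * Complex.exp (2 * (Real.pi : ℂ) * Complex.I * (n : ℂ) * (α j : ℂ))‖ < ε

/-- A set `E ⊆ ℕ` is an `I₀` set if every bounded function on `E` extends to an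
almost periodic sequence on `ℕ`. -/
def IsI0Set (E : Set ℕ) : Prop :=
  ∀ b : ℕ → ℂ, (∃ C : ℝ, ∀ n ∈ E, ‖b n‖ ≤ C) →
    ∃ ψ : ℕ → ℂ, AlmostPeriodic ψ ∧ ∀ r ∈ E, ψ r = b r

noncomputable section AuxI0

namespace AuxI0

open Complex

/-- The basic character `t ↦ e^{2πit}`. -/
def ec (t : ℝ) : ℂ := Complex.exp (2 * (Real.pi : ℂ) * Complex.I * (t : ℂ))

lemma ec_add (s t : ℝ) : ec (s + t) = ec s * ec t := by
  rw [ec, ec, ec, ← Complex.exp_add]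
  congr 1
  push_cast
  ring

lemma ec_zero : ec 0 = 1 := by simp [ec]

lemma ec_norm (t : ℝ) : ‖ec t‖ = 1 := by
  rw [ec]
  have h : 2 * (Real.pi : ℂ) * Complex.I * (t : ℂ) = ((2 * Real.pi * t : ℝ) : ℂ) * Complex.I := by
    push_cast; ring
  rw [h, Complex.norm_exp_ofReal_mul_I]

lemma ec_ne_zero (t : ℝ) : ec t ≠ 0 := Complex.exp_ne_zero _

lemma ec_intCast (k : ℤ) : ec (k : ℝ) = 1 := by
  rw [ec]
  have h : 2 * (Real.pi : ℂ) * Complex.I * ((k : ℝ) : ℂ) = (k : ℂ) * (2 * (Real.pi : ℂ) * Complex.I) := by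
    push_cast; ring
  rw [h, Complex.exp_int_mul_two_pi_mul_I]

lemma ec_half : ec (1 / 2) = -1 := by
  rw [ec]
  have h : 2 * (Real.pi : ℂ) * Complex.I * (((1:ℝ) / 2 : ℝ) : ℂ) = (Real.pi : ℂ) * Complex.I := by
    push_cast; ring
  rw [h, Complex.exp_pi_mul_I]

lemma ec_int_mul_fract (d : ℤ) (t : ℝ) : ec ((d : ℝ) * Int.fract t) = ec ((d : ℝ) * t) := by
  have h : (d : ℝ) * t = (d : ℝ) * Int.fract t + ((d * ⌊t⌋ : ℤ) : ℝ) := by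
    rw [Int.fract]
    push_cast
    ring
  rw [h, ec_add, ec_intCast, mul_one]

lemma ec_nat_fract (e x : ℕ) (t : ℝ) :
    ec (((e : ℝ) - (x : ℝ)) * Int.fract t) = ec (((e : ℝ) - (x : ℝ)) * t) := by
  have h : ((e : ℝ) - (x : ℝ)) = (((e : ℤ) - (x : ℤ) : ℤ) : ℝ) := by push_cast; ring
  rw [h, ec_int_mul_fract]

lemma ec_eq_defForm (n : ℕ) (a : ℝ) :
    ec ((n : ℝ) * a) = Complex.exp (2 * (Real.pi : ℂ) * Complex.I * (n : ℂ) * (a : ℂ)) := by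
  rw [ec]; congr 1; push_cast; ring

/-- Trigonometric polynomials. -/
def IsTP (f : ℕ → ℂ) : Prop :=
  ∃ (m : ℕ) (c : Fin m → ℂ) (α : Fin m → ℝ), ∀ n : ℕ, f n = ∑ j, c j * ec ((n : ℝ) * α j)

lemma isTP_const (a : ℂ) : IsTP (fun _ => a) := by
  refine ⟨1, fun _ => a, fun _ => 0, fun n => ?_⟩
  simp [ec_zero]

lemma isTP_add {f g : ℕ → ℂ} (hf : IsTP f) (hg : IsTP g) : IsTP (fun n => f n + g n) := by
  obtain ⟨m, c, α, hc⟩ := hf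
  obtain ⟨m', c', α', hc'⟩ := hg
  refine ⟨m + m', Fin.append c c', Fin.append α α', fun n => ?_⟩
  rw [Fin.sum_univ_add]
  simp only [Fin.append_left, Fin.append_right]
  rw [hc n, hc' n]

lemma isTP_mul {f g : ℕ → ℂ} (hf : IsTP f) (hg : IsTP g) : IsTP (fun n => f n * g n) := by
  obtain ⟨m, c, α, hc⟩ := hf
  obtain ⟨m', c', α', hc'⟩ := hg
  refine ⟨m * m',
    fun p => c (finProdFinEquiv.symm p).1 * c' (finProdFinEquiv.symm p).2,
    fun p => α (finProdFinEquiv.symm p).1 + α' (finProdFinEquiv.symm p).2, fun n => ?_⟩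
  show f n * g n = _
  rw [hc n, hc' n, Finset.sum_mul_sum]
  rw [← Equiv.sum_comp (finProdFinEquiv :
      Fin m × Fin m' ≃ Fin (m * m'))
      (fun p : Fin (m * m') =>
        (c (finProdFinEquiv.symm p).1 * c' (finProdFinEquiv.symm p).2) *
          ec ((n : ℝ) * (α (finProdFinEquiv.symm p).1 + α' (finProdFinEquiv.symm p).2)))]
  rw [Fintype.sum_prod_type]
  refine Finset.sum_congr rfl fun j _ => Finset.sum_congr rfl fun k _ => ?_
  simp only [Equiv.symm_apply_apply]
  rw [mul_add, ec_add]
  ring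

lemma isTP_bound {f : ℕ → ℂ} (h : IsTP f) : ∃ C : ℝ, 0 ≤ C ∧ ∀ n, ‖f n‖ ≤ C := by
  obtain ⟨m, c, α, hf⟩ := h
  refine ⟨∑ j, ‖c j‖, Finset.sum_nonneg fun _ _ => norm_nonneg _, fun n => ?_⟩
  rw [hf n]
  refine (norm_sum_le _ _).trans ?_
  refine Finset.sum_le_sum fun j _ => ?_
  rw [norm_mul, ec_norm, mul_one]

lemma almostPeriodic_iff (ψ : ℕ → ℂ) :
    AlmostPeriodic ψ ↔ ∀ ε : ℝ, 0 < ε → ∃ f, IsTP f ∧ ∀ n, ‖ψ n - f n‖ < ε := by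
  constructor
  · intro h ε hε
    obtain ⟨m, c, α, hm⟩ := h ε hε
    refine ⟨fun n => ∑ j, c j * ec ((n : ℝ) * α j), ⟨m, c, α, fun _ => rfl⟩, fun n => ?_⟩
    have h2 : (∑ j, c j * ec ((n : ℝ) * α j)) =
        ∑ j, c j * Complex.exp (2 * (Real.pi : ℂ) * Complex.I * (n : ℂ) * (α j : ℂ)) :=
      Finset.sum_congr rfl fun j _ => by rw [ec_eq_defForm]
    show ‖ψ n - ∑ j, c j * ec ((n : ℝ) * α j)‖ < ε
    rw [h2]
    exact hm n
  · intro h ε hε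
    obtain ⟨f, ⟨m, c, α, hf⟩, happ⟩ := h ε hε
    refine ⟨m, c, α, fun n => ?_⟩
    have h2 : (∑ j, c j * Complex.exp (2 * (Real.pi : ℂ) * Complex.I * (n : ℂ) * (α j : ℂ))) = f n := by
      rw [hf n]
      exact Finset.sum_congr rfl fun j _ => by rw [ec_eq_defForm]
    rw [h2]
    exact happ n

lemma ap_of_isTP {f : ℕ → ℂ} (h : IsTP f) : AlmostPeriodic f := by
  rw [almostPeriodic_iff]
  intro ε hε
  exact ⟨f, h, fun n => by simpa using hε⟩

lemma ap_const (a : ℂ) : AlmostPeriodic (fun _ => a) := ap_of_isTP (isTP_const a)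

lemma ap_add {f g : ℕ → ℂ} (hf : AlmostPeriodic f) (hg : AlmostPeriodic g) :
    AlmostPeriodic (fun n => f n + g n) := by
  rw [almostPeriodic_iff] at *
  intro ε hε
  obtain ⟨P, hP, hPa⟩ := hf (ε / 2) (by linarith)
  obtain ⟨Q, hQ, hQa⟩ := hg (ε / 2) (by linarith)
  refine ⟨fun n => P n + Q n, isTP_add hP hQ, fun n => ?_⟩
  have h1 := hPa n
  have h2 := hQa n
  have h3 : f n + g n - (P n + Q n) = (f n - P n) + (g n - Q n) := by ring
  rw [h3]
  calc ‖(f n - P n) + (g n - Q n)‖ ≤ ‖f n - P n‖ + ‖g n - Q n‖ := norm_add_le _ _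
    _ < ε := by linarith

lemma ap_bounded {ψ : ℕ → ℂ} (h : AlmostPeriodic ψ) : ∃ C : ℝ, 0 ≤ C ∧ ∀ n, ‖ψ n‖ ≤ C := by
  obtain ⟨f, hTP, happ⟩ := (almostPeriodic_iff ψ).1 h 1 one_pos
  obtain ⟨C, hC0, hC⟩ := isTP_bound hTP
  refine ⟨C + 1, by linarith, fun n => ?_⟩
  have h1 := happ n
  have h2 := hC n
  have h3 : ψ n = (ψ n - f n) + f n := by ring
  calc ‖ψ n‖ = ‖(ψ n - f n) + f n‖ := by rw [← h3]
    _ ≤ ‖ψ n - f n‖ + ‖f n‖ := norm_add_le _ _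
    _ ≤ C + 1 := by linarith

lemma ap_mul {f g : ℕ → ℂ} (hf : AlmostPeriodic f) (hg : AlmostPeriodic g) :
    AlmostPeriodic (fun n => f n * g n) := by
  obtain ⟨Cf, hCf0, hCf⟩ := ap_bounded hf
  rw [almostPeriodic_iff] at *
  intro ε hε
  have hεg : 0 < ε / (2 * (Cf + 1)) := by positivity
  obtain ⟨Q, hQTP, hQ⟩ := hg _ hεg
  obtain ⟨CQ, hCQ0, hCQ⟩ := isTP_bound hQTP
  have hεf : 0 < ε / (2 * (CQ + 1)) := by positivity
  obtain ⟨P, hPTP, hP⟩ := hf _ hεf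
  refine ⟨fun n => P n * Q n, isTP_mul hPTP hQTP, fun n => ?_⟩
  have key : f n * g n - P n * Q n = f n * (g n - Q n) + (f n - P n) * Q n := by ring
  rw [key]
  have h1 : ‖f n * (g n - Q n)‖ ≤ Cf * (ε / (2 * (Cf + 1))) := by
    rw [norm_mul]
    exact mul_le_mul (hCf n) (le_of_lt (hQ n)) (norm_nonneg _) hCf0
  have h2 : ‖(f n - P n) * Q n‖ ≤ (ε / (2 * (CQ + 1))) * CQ := by
    rw [norm_mul]
    exact mul_le_mul (le_of_lt (hP n)) (hCQ n) (norm_nonneg _) (le_of_lt hεf)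
  have h3 : Cf * (ε / (2 * (Cf + 1))) < ε / 2 := by
    have e1 : Cf * (ε / (2 * (Cf + 1))) = Cf * ε / (2 * (Cf + 1)) := by ring
    rw [e1, div_lt_div_iff₀ (by positivity) (by norm_num : (0:ℝ) < 2)]
    nlinarith
  have h4 : (ε / (2 * (CQ + 1))) * CQ ≤ ε / 2 := by
    have e1 : (ε / (2 * (CQ + 1))) * CQ = ε * CQ / (2 * (CQ + 1)) := by ring
    rw [e1, div_le_div_iff₀ (by positivity) (by norm_num : (0:ℝ) < 2)]
    nlinarith
  calc ‖f n * (g n - Q n) + (f n - P n) * Q n‖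
      ≤ ‖f n * (g n - Q n)‖ + ‖(f n - P n) * Q n‖ := norm_add_le _ _
    _ < ε := by linarith

lemma ap_finset_sum {ι : Type*} (s : Finset ι) (g : ι → ℕ → ℂ)
    (h : ∀ i ∈ s, AlmostPeriodic (g i)) :
    AlmostPeriodic (fun n => ∑ i ∈ s, g i n) := by
  classical
  induction s using Finset.induction_on with
  | empty => simpa using ap_const 0
  | @insert a s ha ih =>
    simp only [Finset.sum_insert ha]
    exact ap_add (h a (Finset.mem_insert_self a s))
      (ih fun i hi => h i (Finset.mem_insert_of_mem hi))

lemma ap_finset_prod {ι : Type*} (s : Finset ι) (g : ι → ℕ → ℂ)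
    (h : ∀ i ∈ s, AlmostPeriodic (g i)) :
    AlmostPeriodic (fun n => ∏ i ∈ s, g i n) := by
  classical
  induction s using Finset.induction_on with
  | empty => simpa using ap_const 1
  | @insert a s ha ih =>
    simp only [Finset.prod_insert ha]
    exact ap_mul (h a (Finset.mem_insert_self a s))
      (ih fun i hi => h i (Finset.mem_insert_of_mem hi))


lemma fourier_coe_ec (k : ℤ) (t : ℝ) :
    (fourier k : C(AddCircle (1:ℝ), ℂ)) ((t : ℝ) : AddCircle (1:ℝ)) = ec ((k : ℝ) * t) := by
  rw [fourier_coe_apply, ec]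
  congr 1
  push_cast
  ring

lemma factor_ap (x : ℕ) (ϑ δ : ℝ) (hδ : 0 < δ) :
    AlmostPeriodic (fun n : ℕ => ((max 0 (1 - ‖ec (((n:ℝ) - (x:ℝ)) * ϑ) - 1‖ / δ) : ℝ) : ℂ)) := by
  haveI : Fact ((0:ℝ) < 1) := ⟨one_pos⟩
  rw [almostPeriodic_iff]
  intro ε hε
  have hGc : Continuous (fun s : AddCircle (1:ℝ) =>
      ((max 0 (1 - ‖(fourier 1 : C(AddCircle (1:ℝ), ℂ)) s - 1‖ / δ) : ℝ) : ℂ)) := by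
    refine Complex.continuous_ofReal.comp ?_
    refine Continuous.max continuous_const ?_
    refine Continuous.sub continuous_const ?_
    exact (((map_continuous (fourier 1)).sub continuous_const).norm).div_const δ
  set G : C(AddCircle (1:ℝ), ℂ) := ⟨_, hGc⟩ with hGdef
  have hmem : G ∈ closure ((Submodule.span ℂ (Set.range (@fourier (1:ℝ))) :
      Submodule ℂ C(AddCircle (1:ℝ), ℂ)) : Set C(AddCircle (1:ℝ), ℂ)) := by
    have h := span_fourier_closure_eq_top (T := 1)
    have h2 : G ∈ (Submodule.span ℂ (Set.range (@fourier (1:ℝ)))).topologicalClosure := by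
      rw [h]; exact Submodule.mem_top
    rw [← Submodule.topologicalClosure_coe]
    exact h2
  obtain ⟨g, hgmem, hgdist⟩ := Metric.mem_closure_iff.1 hmem ε hε
  rw [SetLike.mem_coe] at hgmem
  obtain ⟨k, cf, vf, hrep⟩ := Submodule.mem_span_set'.1 hgmem
  choose kk hkk using fun i : Fin k => (vf i).2
  refine ⟨fun n => ∑ i : Fin k, (cf i * ec (-(x:ℝ) * ((kk i : ℝ) * ϑ))) * ec ((n:ℝ) * ((kk i : ℝ) * ϑ)),
    ⟨k, _, _, fun n => rfl⟩, fun n => ?_⟩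
  have hval : ((max 0 (1 - ‖ec (((n:ℝ) - (x:ℝ)) * ϑ) - 1‖ / δ) : ℝ) : ℂ) =
      G ((((n:ℝ) - (x:ℝ)) * ϑ : ℝ) : AddCircle (1:ℝ)) := by
    rw [hGdef]
    show _ = ((max 0 (1 - ‖(fourier 1 : C(AddCircle (1:ℝ), ℂ))
      ((((n:ℝ) - (x:ℝ)) * ϑ : ℝ) : AddCircle (1:ℝ)) - 1‖ / δ) : ℝ) : ℂ)
    rw [fourier_coe_ec]
    norm_num
  have happ : (∑ i : Fin k, (cf i * ec (-(x:ℝ) * ((kk i : ℝ) * ϑ))) * ec ((n:ℝ) * ((kk i : ℝ) * ϑ)))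
      = g ((((n:ℝ) - (x:ℝ)) * ϑ : ℝ) : AddCircle (1:ℝ)) := by
    rw [← hrep, ContinuousMap.sum_apply]
    refine Finset.sum_congr rfl fun i _ => ?_
    rw [ContinuousMap.smul_apply, ← hkk i, fourier_coe_ec, smul_eq_mul]
    have harg : (kk i : ℝ) * (((n:ℝ) - (x:ℝ)) * ϑ)
        = -(x:ℝ) * ((kk i : ℝ) * ϑ) + (n:ℝ) * ((kk i : ℝ) * ϑ) := by ring
    rw [harg, ec_add]
    ring
  show ‖((max 0 (1 - ‖ec (((n:ℝ) - (x:ℝ)) * ϑ) - 1‖ / δ) : ℝ) : ℂ) -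
      ∑ i : Fin k, (cf i * ec (-(x:ℝ) * ((kk i : ℝ) * ϑ))) * ec ((n:ℝ) * ((kk i : ℝ) * ϑ))‖ < ε
  rw [hval, happ, ← dist_eq_norm]
  exact lt_of_le_of_lt (ContinuousMap.dist_apply_le_dist _) hgdist


lemma continuous_ec : Continuous ec :=
  Complex.continuous_exp.comp (continuous_const.mul Complex.continuous_ofReal)

/-- Cluster hypothesis: every Bohr neighbourhood of `x` meets `E` outside any finite set. -/
def ClusterHyp (E : Set ℕ) (x : ℕ) : Prop :=
  ∀ (m : ℕ) (θ : Fin m → ℝ) (δ : ℝ), 0 < δ → δ ≤ 2 → ∀ D : Finset ℕ,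
    ∃ e, e ∈ E ∧ e ∉ D ∧ ∀ i, ‖ec (((e:ℝ) - (x:ℝ)) * θ i) - 1‖ < δ

lemma coverStep (E : Set ℕ) (x : ℕ) (hcl : ClusterHyp E x)
    (m : ℕ) (δ : ℝ) (hδ : 0 < δ) (hδ2 : δ ≤ 2) (used : Finset ℕ) :
    ∃ S : Finset ℕ, (∀ s ∈ S, s ∈ E ∧ s ∉ used) ∧
      ∀ θ : Fin m → ℝ, ∃ e ∈ S, ∀ i, ‖ec (((e:ℝ) - (x:ℝ)) * θ i) - 1‖ < δ := by
  classical
  have hK : IsCompact (Set.univ.pi (fun _ : Fin m => Set.Icc (0:ℝ) 1)) :=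
    isCompact_univ_pi (fun _ => isCompact_Icc)
  set ι := {e : ℕ // e ∈ E ∧ e ∉ used} with hι
  set U : ι → Set (Fin m → ℝ) := fun e =>
    ⋂ i, {θ : Fin m → ℝ | ‖ec (((e.1:ℝ) - (x:ℝ)) * θ i) - 1‖ < δ} with hU
  have hUopen : ∀ e, IsOpen (U e) := by
    intro e
    refine isOpen_iInter_of_finite fun i => ?_
    have hc : Continuous fun θ : Fin m → ℝ => ‖ec (((e.1:ℝ) - (x:ℝ)) * θ i) - 1‖ :=
      ((continuous_ec.comp (continuous_const.mul (continuous_apply i))).sub continuous_const).norm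
    exact isOpen_lt hc continuous_const
  have hcov : Set.univ.pi (fun _ : Fin m => Set.Icc (0:ℝ) 1) ⊆ ⋃ e, U e := by
    intro θ _
    obtain ⟨e, heE, heu, he⟩ := hcl m θ δ hδ hδ2 used
    refine Set.mem_iUnion.2 ⟨⟨e, heE, heu⟩, ?_⟩
    exact Set.mem_iInter.2 fun i => he i
  obtain ⟨t, ht⟩ := hK.elim_finite_subcover U hUopen hcov
  refine ⟨t.image (fun e => e.1), ?_, ?_⟩
  · intro s hs
    obtain ⟨e, _, rfl⟩ := Finset.mem_image.1 hs
    exact e.2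
  · intro θ
    have hθ' : (fun i => Int.fract (θ i)) ∈ Set.univ.pi (fun _ : Fin m => Set.Icc (0:ℝ) 1) := by
      intro i _
      exact ⟨Int.fract_nonneg _, (Int.fract_lt_one _).le⟩
    have hmem := ht hθ'
    rw [Set.mem_iUnion₂] at hmem
    obtain ⟨e, het, he⟩ := hmem
    refine ⟨e.1, Finset.mem_image.2 ⟨e, het, rfl⟩, fun i => ?_⟩
    have h2 := Set.mem_iInter.1 he i
    rw [Set.mem_setOf_eq] at h2
    rwa [ec_nat_fract] at h2

lemma delta_pos (r : ℕ) : (0:ℝ) < 2/((r:ℝ)+2) := by positivity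

lemma delta_le (r : ℕ) : 2/((r:ℝ)+2) ≤ 2 := by
  rw [div_le_iff₀ (by positivity : (0:ℝ) < (r:ℝ)+2)]
  have h : (0:ℝ) ≤ (r:ℝ) := Nat.cast_nonneg r
  nlinarith

lemma exists_batches (E : Set ℕ) (x : ℕ) (hcl : ClusterHyp E x) (r : ℕ)
    (p : Finset ℕ × Finset ℕ) :
    ∃ q : Finset ℕ × Finset ℕ,
      (∀ a ∈ q.1, a ∈ E ∧ a ∉ p.1 ∪ p.2) ∧ (∀ a ∈ q.2, a ∈ E ∧ a ∉ p.1 ∪ p.2 ∪ q.1) ∧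
      (∀ θ : Fin (r+1) → ℝ,
        (∃ e ∈ q.1, ∀ i, ‖ec (((e:ℝ) - (x:ℝ)) * θ i) - 1‖ < 2/((r:ℝ)+2)) ∧
        (∃ e ∈ q.2, ∀ i, ‖ec (((e:ℝ) - (x:ℝ)) * θ i) - 1‖ < 2/((r:ℝ)+2))) := by
  obtain ⟨S₁, hS₁, hc₁⟩ := coverStep E x hcl (r+1) (2/((r:ℝ)+2)) (delta_pos r) (delta_le r)
    (p.1 ∪ p.2)
  obtain ⟨S₂, hS₂, hc₂⟩ := coverStep E x hcl (r+1) (2/((r:ℝ)+2)) (delta_pos r) (delta_le r)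
    (p.1 ∪ p.2 ∪ S₁)
  exact ⟨(S₁, S₂), hS₁, hS₂, fun θ => ⟨hc₁ θ, hc₂ θ⟩⟩

noncomputable def bState (E : Set ℕ) (x : ℕ) (hcl : ClusterHyp E x) : ℕ → Finset ℕ × Finset ℕ
  | 0 => (∅, ∅)
  | r+1 =>
    ((bState E x hcl r).1 ∪ ((exists_batches E x hcl r (bState E x hcl r)).choose).1,
     (bState E x hcl r).2 ∪ ((exists_batches E x hcl r (bState E x hcl r)).choose).2)

lemma bState_succ (E : Set ℕ) (x : ℕ) (hcl : ClusterHyp E x) (r : ℕ) :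
    bState E x hcl (r+1) =
      ((bState E x hcl r).1 ∪ ((exists_batches E x hcl r (bState E x hcl r)).choose).1,
       (bState E x hcl r).2 ∪ ((exists_batches E x hcl r (bState E x hcl r)).choose).2) := by
  rfl

lemma bState_inv (E : Set ℕ) (x : ℕ) (hcl : ClusterHyp E x) (r : ℕ) :
    (∀ a ∈ (bState E x hcl r).1, a ∈ E) ∧ (∀ a ∈ (bState E x hcl r).2, a ∈ E) ∧
    (∀ a ∈ (bState E x hcl r).1, a ∉ (bState E x hcl r).2) := by
  induction r with
  | zero => refine ⟨?_, ?_, ?_⟩ <;> simp [bState]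
  | succ r ih =>
    obtain ⟨h1, h2, h12⟩ := ih
    obtain ⟨hq1, hq2, _⟩ := (exists_batches E x hcl r (bState E x hcl r)).choose_spec
    rw [bState_succ]
    refine ⟨?_, ?_, ?_⟩
    · intro a ha
      rcases Finset.mem_union.1 ha with h | h
      · exact h1 a h
      · exact (hq1 a h).1
    · intro a ha
      rcases Finset.mem_union.1 ha with h | h
      · exact h2 a h
      · exact (hq2 a h).1
    · intro a ha hb
      rcases Finset.mem_union.1 ha with h | h
      · rcases Finset.mem_union.1 hb with h' | h'
        · exact h12 a h h'
        · exact (hq2 a h').2 (Finset.mem_union.2 (Or.inl (Finset.mem_union.2 (Or.inl h))))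
      · rcases Finset.mem_union.1 hb with h' | h'
        · exact (hq1 a h).2 (Finset.mem_union.2 (Or.inr h'))
        · exact (hq2 a h').2 (Finset.mem_union.2 (Or.inr h))

lemma bState_mono1 (E : Set ℕ) (x : ℕ) (hcl : ClusterHyp E x) {r r' : ℕ} (h : r ≤ r') :
    (bState E x hcl r).1 ⊆ (bState E x hcl r').1 := by
  induction r', h using Nat.le_induction with
  | base => exact Finset.Subset.refl _
  | succ r' hr ih =>
    refine ih.trans ?_
    rw [bState_succ]
    exact Finset.subset_union_left

lemma bState_mono2 (E : Set ℕ) (x : ℕ) (hcl : ClusterHyp E x) {r r' : ℕ} (h : r ≤ r') :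
    (bState E x hcl r).2 ⊆ (bState E x hcl r').2 := by
  induction r', h using Nat.le_induction with
  | base => exact Finset.Subset.refl _
  | succ r' hr ih =>
    refine ih.trans ?_
    rw [bState_succ]
    exact Finset.subset_union_left


lemma sep_of_I0 (E : Set ℕ) (x : ℕ) (hE : IsI0Set E) (hx : x ∉ E) :
    ∃ (m : ℕ) (θ : Fin m → ℝ) (δ : ℝ), 0 < δ ∧
      ∀ e ∈ E, ∃ i, δ ≤ ‖ec (((e:ℝ) - (x:ℝ)) * θ i) - 1‖ := by
  classical
  by_contra hcon
  push_neg at hcon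
  have hcl : ClusterHyp E x := by
    intro m θ δ hδ hδ2 D
    obtain ⟨e, heE, he⟩ := hcon (m + D.card)
      (Fin.append θ (fun j => 1/(2*(((D.equivFin.symm j : ℕ):ℝ) - (x:ℝ))))) δ hδ
    refine ⟨e, heE, ?_, fun i => by
      have h := he (Fin.castAdd D.card i)
      rwa [Fin.append_left] at h⟩
    intro heD
    have hxe : e ≠ x := fun h => hx (h ▸ heE)
    have h2 := he (Fin.natAdd m (D.equivFin ⟨e, heD⟩))
    rw [Fin.append_right] at h2
    have hj : ((D.equivFin.symm (D.equivFin ⟨e, heD⟩) : ℕ)) = e := by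
      rw [Equiv.symm_apply_apply]
    rw [hj] at h2
    have hne : ((e:ℝ) - (x:ℝ)) ≠ 0 := by
      intro h
      apply hxe
      have h3 := sub_eq_zero.1 h
      exact_mod_cast h3
    rw [show ((e:ℝ) - (x:ℝ)) * (1/(2*((e:ℝ) - (x:ℝ)))) = 1/2 by field_simp] at h2
    rw [ec_half] at h2
    have hn2 : ‖(-1 : ℂ) - 1‖ = 2 := by
      have h4 : (-1 : ℂ) - 1 = -2 := by ring
      rw [h4, norm_neg]
      simp
    rw [hn2] at h2
    linarith
  -- the splitting set
  set A : Set ℕ := {a | ∃ r, a ∈ (bState E x hcl r).1} with hA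
  have hAE : ∀ a ∈ A, a ∈ E := by
    rintro a ⟨r, hr⟩
    exact (bState_inv E x hcl r).1 a hr
  have hnA : ∀ r, ∀ a ∈ (bState E x hcl r).2, a ∉ A := by
    intro r a ha
    rintro ⟨r', hr'⟩
    have h1 : a ∈ (bState E x hcl (max r r')).2 := bState_mono2 E x hcl (le_max_left r r') ha
    have h2 : a ∈ (bState E x hcl (max r r')).1 := bState_mono1 E x hcl (le_max_right r r') hr'
    exact (bState_inv E x hcl (max r r')).2.2 a h2 h1
  have hSPL : ∀ (m : ℕ) (θ : Fin m → ℝ) (δ : ℝ), 0 < δ →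
      ∃ e e', e ∈ E ∧ e ∈ A ∧ e' ∈ E ∧ e' ∉ A ∧
        (∀ i, ‖ec (((e:ℝ) - (x:ℝ)) * θ i) - 1‖ < δ) ∧
        (∀ i, ‖ec (((e':ℝ) - (x:ℝ)) * θ i) - 1‖ < δ) := by
    intro m θ δ hδ
    set r := max m ⌈2/δ⌉₊ with hr
    have hrm : m ≤ r + 1 := le_trans (le_max_left _ _) (Nat.le_succ r)
    have hrδ : 2/((r:ℝ)+2) ≤ δ := by
      have h1 : (2/δ) ≤ ((⌈2/δ⌉₊ : ℕ):ℝ) := Nat.le_ceil _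
      have h2 : ((⌈2/δ⌉₊ : ℕ):ℝ) ≤ (r:ℝ) := by
        have := le_max_right m ⌈2/δ⌉₊
        exact_mod_cast this
      rw [div_le_iff₀ (by positivity : (0:ℝ) < (r:ℝ)+2)]
      have h3 : 2/δ ≤ (r:ℝ) + 2 := by linarith
      calc (2:ℝ) = δ * (2/δ) := by field_simp
        _ ≤ δ * ((r:ℝ)+2) := mul_le_mul_of_nonneg_left h3 hδ.le
    set θh : Fin (r+1) → ℝ := fun i => if h : (i:ℕ) < m then θ ⟨(i:ℕ), h⟩ else 0 with hθh
    obtain ⟨hq1, hq2, hqc⟩ := (exists_batches E x hcl r (bState E x hcl r)).choose_spec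
    obtain ⟨⟨e, he1, hec⟩, ⟨e', he'1, he'c⟩⟩ := hqc θh
    have heA : e ∈ A := by
      refine ⟨r+1, ?_⟩
      rw [bState_succ]
      exact Finset.mem_union.2 (Or.inr he1)
    have he'2 : e' ∈ (bState E x hcl (r+1)).2 := by
      rw [bState_succ]
      exact Finset.mem_union.2 (Or.inr he'1)
    have hcast : ∀ (i : Fin m), θh ⟨(i:ℕ), lt_of_lt_of_le i.2 hrm⟩ = θ i := by
      intro i
      rw [hθh]
      have hlt : ((⟨(i:ℕ), lt_of_lt_of_le i.2 hrm⟩ : Fin (r+1)) : ℕ) < m := i.2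
      simp only [dif_pos hlt]
    refine ⟨e, e', (hq1 e he1).1, heA, (hq2 e' he'1).1, hnA (r+1) e' he'2,
      fun i => ?_, fun i => ?_⟩
    · have h := hec ⟨(i:ℕ), lt_of_lt_of_le i.2 hrm⟩
      rw [hcast i] at h
      exact lt_of_lt_of_le h hrδ
    · have h := he'c ⟨(i:ℕ), lt_of_lt_of_le i.2 hrm⟩
      rw [hcast i] at h
      exact lt_of_lt_of_le h hrδ
  -- contradiction with interpolation of the indicator of A
  set b : ℕ → ℂ := fun n => if n ∈ A then 1 else 0 with hb
  obtain ⟨φ, hφAP, hφE⟩ := hE b ⟨1, fun n _ => by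
    by_cases h : n ∈ A <;> simp [hb, h]⟩
  obtain ⟨f, ⟨m, c, α, hf⟩, happ⟩ := (almostPeriodic_iff φ).1 hφAP (1/8) (by norm_num)
  set C := ∑ j, ‖c j‖ with hC
  have hC0 : 0 ≤ C := Finset.sum_nonneg fun _ _ => norm_nonneg _
  obtain ⟨e, e', heE, heA, he'E, he'A, hce, hce'⟩ := hSPL m α (1/(8*(C+1))) (by positivity)
  have hφe : φ e = 1 := by rw [hφE e heE, hb]; simp [heA]
  have hφe' : φ e' = 0 := by rw [hφE e' he'E, hb]; simp [he'A]
  have hdiff : ∀ (a : ℝ), ‖ec ((e:ℝ) * a) - ec ((e':ℝ) * a)‖ ≤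
      ‖ec (((e:ℝ) - (x:ℝ)) * a) - 1‖ + ‖ec (((e':ℝ) - (x:ℝ)) * a) - 1‖ := by
    intro a
    have h1 : ec ((e:ℝ) * a) = ec ((x:ℝ)*a) * ec (((e:ℝ) - (x:ℝ)) * a) := by
      rw [← ec_add]; congr 1; ring
    have h2 : ec ((e':ℝ) * a) = ec ((x:ℝ)*a) * ec (((e':ℝ) - (x:ℝ)) * a) := by
      rw [← ec_add]; congr 1; ring
    rw [h1, h2, ← mul_sub, norm_mul, ec_norm, one_mul]
    have h3 : ec (((e:ℝ) - (x:ℝ)) * a) - ec (((e':ℝ) - (x:ℝ)) * a)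
        = (ec (((e:ℝ) - (x:ℝ)) * a) - 1) - (ec (((e':ℝ) - (x:ℝ)) * a) - 1) := by ring
    rw [h3]
    exact norm_sub_le _ _
  have hfe : ‖f e - f e'‖ ≤ C * (2 * (1/(8*(C+1)))) := by
    rw [hf e, hf e', ← Finset.sum_sub_distrib]
    refine (norm_sum_le _ _).trans ?_
    have hterm : ∀ j : Fin m, ‖c j * ec ((e:ℝ) * α j) - c j * ec ((e':ℝ) * α j)‖
        ≤ ‖c j‖ * (2 * (1/(8*(C+1)))) := by
      intro j
      rw [← mul_sub, norm_mul]
      refine mul_le_mul_of_nonneg_left ?_ (norm_nonneg _)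
      refine (hdiff (α j)).trans ?_
      linarith [hce j, hce' j]
    refine (Finset.sum_le_sum fun j _ => hterm j).trans ?_
    rw [← Finset.sum_mul]
  have hfe2 : C * (2 * (1/(8*(C+1)))) < 1/4 := by
    rw [show C * (2*(1/(8*(C+1)))) = 2*C/(8*(C+1)) by ring,
      div_lt_div_iff₀ (by positivity) (by norm_num : (0:ℝ) < 4)]
    nlinarith
  have htri : (1:ℝ) ≤ ‖φ e - f e‖ + ‖f e - f e'‖ + ‖f e' - φ e'‖ := by
    have h0 : φ e - φ e' = (φ e - f e) + (f e - f e') + (f e' - φ e') := by ring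
    have h1 : ‖φ e - φ e'‖ = 1 := by rw [hφe, hφe']; norm_num
    calc (1:ℝ) = ‖φ e - φ e'‖ := h1.symm
      _ = ‖(φ e - f e) + (f e - f e') + (f e' - φ e')‖ := by rw [← h0]
      _ ≤ _ := norm_add₃_le
  have ha1 := happ e
  have ha2 : ‖f e' - φ e'‖ < 1/8 := by rw [norm_sub_rev]; exact happ e'
  linarith


lemma exists_separating (E : Set ℕ) (x : ℕ) (hE : IsI0Set E) (hx : x ∉ E) :
    ∃ φ : ℕ → ℂ, AlmostPeriodic φ ∧ (∀ e ∈ E, φ e = 0) ∧ φ x = 1 := by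
  obtain ⟨m, θ, δ, hδ, hsep⟩ := sep_of_I0 E x hE hx
  refine ⟨fun n => ∏ i : Fin m, ((max 0 (1 - ‖ec (((n:ℝ) - (x:ℝ)) * θ i) - 1‖ / δ) : ℝ) : ℂ),
    ?_, ?_, ?_⟩
  · exact ap_finset_prod Finset.univ
      (fun i => fun n => ((max 0 (1 - ‖ec (((n:ℝ) - (x:ℝ)) * θ i) - 1‖ / δ) : ℝ) : ℂ))
      (fun i _ => factor_ap x (θ i) δ hδ)
  · intro e he
    obtain ⟨i, hi⟩ := hsep e he
    refine Finset.prod_eq_zero (Finset.mem_univ i) ?_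
    have h1 : 1 - ‖ec (((e:ℝ) - (x:ℝ)) * θ i) - 1‖ / δ ≤ 0 := by
      rw [sub_nonpos]
      exact (one_le_div hδ).2 hi
    rw [max_eq_left h1]
    simp
  · refine Finset.prod_eq_one fun i _ => ?_
    have h1 : ((x:ℝ) - (x:ℝ)) * θ i = 0 := by ring
    rw [h1, ec_zero]
    simp

lemma hsep_tp (x y : ℕ) : IsTP (fun n : ℕ =>
    (ec ((n:ℝ) * (1/(2*((x:ℝ)-(y:ℝ))))) - ec ((y:ℝ) * (1/(2*((x:ℝ)-(y:ℝ)))))) /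
    (ec ((x:ℝ) * (1/(2*((x:ℝ)-(y:ℝ))))) - ec ((y:ℝ) * (1/(2*((x:ℝ)-(y:ℝ))))))) := by
  set σ := 1/(2*((x:ℝ)-(y:ℝ))) with hσ
  set d := ec ((x:ℝ)*σ) - ec ((y:ℝ)*σ) with hd
  refine ⟨2, ![ -(ec ((y:ℝ)*σ))/d, 1/d], ![0, σ], fun n => ?_⟩
  rw [Fin.sum_univ_two]
  simp only [Matrix.cons_val_zero, Matrix.cons_val_one, Matrix.head_cons]
  rw [mul_zero, ec_zero, mul_one, sub_div]
  ring

lemma hsep_den_ne (x y : ℕ) (hxy : x ≠ y) :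
    ec ((x:ℝ) * (1/(2*((x:ℝ)-(y:ℝ))))) - ec ((y:ℝ) * (1/(2*((x:ℝ)-(y:ℝ))))) ≠ 0 := by
  have hne : ((x:ℝ) - (y:ℝ)) ≠ 0 := sub_ne_zero.2 (by exact_mod_cast hxy)
  have h1 : (x:ℝ) * (1/(2*((x:ℝ)-(y:ℝ)))) = (y:ℝ) * (1/(2*((x:ℝ)-(y:ℝ)))) + 1/2 := by
    field_simp
    ring
  rw [h1, ec_add, ec_half]
  intro h
  have h2 : ec ((y:ℝ) * (1/(2*((x:ℝ)-(y:ℝ))))) * (-1 : ℂ)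
      - ec ((y:ℝ) * (1/(2*((x:ℝ)-(y:ℝ))))) = -2 * ec ((y:ℝ) * (1/(2*((x:ℝ)-(y:ℝ))))) := by ring
  rw [h2] at h
  rcases mul_eq_zero.1 h with h3 | h3
  · norm_num at h3
  · exact ec_ne_zero _ h3

end AuxI0

end AuxI0

theorem I0_union_finite (E F : Set ℕ) (hE : IsI0Set E) (hF : F.Finite) :
    IsI0Set (E ∪ F) := by
  classical
  intro b hb
  obtain ⟨C, hC⟩ := hb
  obtain ⟨ψ, hψAP, hψE⟩ := hE b ⟨C, fun n hn => hC n (Or.inl hn)⟩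
  set G : Finset ℕ := hF.toFinset.filter (fun y => y ∉ E) with hG
  have hkey : ∀ x : ℕ, ∃ φ : ℕ → ℂ, AlmostPeriodic φ ∧
      (x ∈ G → ((∀ e ∈ E, φ e = 0) ∧ φ x = 1)) := by
    intro x
    by_cases hx : x ∈ G
    · have hxE : x ∉ E := (Finset.mem_filter.1 hx).2
      obtain ⟨φ, h1, h2, h3⟩ := AuxI0.exists_separating E x hE hxE
      exact ⟨φ, h1, fun _ => ⟨h2, h3⟩⟩
    · exact ⟨fun _ => 0, AuxI0.ap_const 0, fun h => absurd h hx⟩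
  choose φ hφAP hφprop using hkey
  set sep : ℕ → ℕ → ℕ → ℂ := fun x y n =>
    (AuxI0.ec ((n:ℝ) * (1/(2*((x:ℝ)-(y:ℝ))))) - AuxI0.ec ((y:ℝ) * (1/(2*((x:ℝ)-(y:ℝ)))))) /
    (AuxI0.ec ((x:ℝ) * (1/(2*((x:ℝ)-(y:ℝ))))) - AuxI0.ec ((y:ℝ) * (1/(2*((x:ℝ)-(y:ℝ))))))
    with hsepdef
  have hsep_ap : ∀ x y : ℕ, AlmostPeriodic (sep x y) := fun x y =>
    AuxI0.ap_of_isTP (AuxI0.hsep_tp x y)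
  have hsep_self : ∀ x y : ℕ, x ≠ y → sep x y x = 1 := by
    intro x y hxy
    simp only [hsepdef]
    exact div_self (AuxI0.hsep_den_ne x y hxy)
  have hsep_other : ∀ x y : ℕ, sep x y y = 0 := by
    intro x y
    simp [hsepdef]
  refine ⟨fun n => ψ n + ∑ x ∈ G, (b x - ψ x) * (φ x n * ∏ y ∈ G.erase x, sep x y n), ?_, ?_⟩
  · refine AuxI0.ap_add hψAP ?_
    refine AuxI0.ap_finset_sum G _ fun x _ => ?_
    refine AuxI0.ap_mul (AuxI0.ap_const _) ?_
    refine AuxI0.ap_mul (hφAP x) ?_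
    exact AuxI0.ap_finset_prod _ _ fun y _ => hsep_ap x y
  · intro r hr
    show ψ r + ∑ x ∈ G, (b x - ψ x) * (φ x r * ∏ y ∈ G.erase x, sep x y r) = b r
    by_cases hrE : r ∈ E
    · have hz : ∀ x ∈ G, (b x - ψ x) * (φ x r * ∏ y ∈ G.erase x, sep x y r) = 0 := by
        intro x hxG
        rw [(hφprop x hxG).1 r hrE]
        ring
      rw [Finset.sum_congr rfl hz, Finset.sum_const_zero, add_zero]
      exact hψE r hrE
    · have hrG : r ∈ G := by
        rcases hr with h | h
        · exact absurd h hrE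
        · exact Finset.mem_filter.2 ⟨hF.mem_toFinset.2 h, hrE⟩
      have hsum : (∑ x ∈ G, (b x - ψ x) * (φ x r * ∏ y ∈ G.erase x, sep x y r))
          = b r - ψ r := by
        rw [Finset.sum_eq_single r]
        · rw [(hφprop r hrG).2,
            Finset.prod_eq_one fun y hy => hsep_self r y
              (Ne.symm (Finset.mem_erase.1 hy).1)]
          ring
        · intro x hxG hxr
          have hz0 : (∏ y ∈ G.erase x, sep x y r) = 0 :=
            Finset.prod_eq_zero (f := fun y => sep x y r)
              (Finset.mem_erase.2 ⟨Ne.symm hxr, hrG⟩) (hsep_other x r)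
          rw [hz0]
          ring
        · intro h
          exact absurd hrG h
      rw [hsum]
      ring
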